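/- Suppose there exists a positive integer m such that [x,y]^m = 1 for all x, y ∈ G. Then every element z of the subgroup L₁₂ = ⁅L₁,L₂⁆ of the weak commutativity group χ(G) satisfies z^m = 1 (so the exponent of L₁₂ divides m). -/

import Mathlib

open Subgroup
open scoped commutatorElement

/-- The weak commutativity relations inside the free product `G ∗ G`. -/
def chiRel (G : Type*) [Group G] : Subgroup (Monoid.Coprod G G) :=
  Subgroup.normalClosure
    {x | ∃ g : G, x = Monoid.Coprod.inl g * Monoid.Coprod.inr g *
      (Monoid.Coprod.inl g)⁻¹ * (Monoid.Coprod.inr g)⁻¹}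

instance chiRel_normal (G : Type*) [Group G] : (chiRel G).Normal :=
  Subgroup.normalClosure_normal

/-- The weak commutativity group `χ(G)`. -/
def Chi (G : Type*) [Group G] : Type _ := Monoid.Coprod G G ⧸ chiRel G

instance (G : Type*) [Group G] : Group (Chi G) :=
  inferInstanceAs (Group (Monoid.Coprod G G ⧸ chiRel G))

/-- The canonical map `G → χ(G)`, `g ↦ g`. -/
def chiIota1 (G : Type*) [Group G] : G →* Chi G :=
  (QuotientGroup.mk' (chiRel G)).comp Monoid.Coprod.inl

/-- The canonical map `G → χ(G)`, `g ↦ g^φ`. -/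
def chiIota2 (G : Type*) [Group G] : G →* Chi G :=
  (QuotientGroup.mk' (chiRel G)).comp Monoid.Coprod.inr

/-- `G₁ ≤ χ(G)`. -/
def chiG1 (G : Type*) [Group G] : Subgroup (Chi G) := (chiIota1 G).range

/-- `G₂ = G^φ ≤ χ(G)`. -/
def chiG2 (G : Type*) [Group G] : Subgroup (Chi G) := (chiIota2 G).range

/-- `L = ⟨g⁻¹ g^φ : g ∈ G⟩`. -/
def chiL (G : Type*) [Group G] : Subgroup (Chi G) :=
  Subgroup.closure {x | ∃ g : G, x = (chiIota1 G g)⁻¹ * chiIota2 G g}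

/-- `D = ⁅G₁, G₂⁆`. -/
def chiD (G : Type*) [Group G] : Subgroup (Chi G) := ⁅chiG1 G, chiG2 G⁆

/-- `L₁ = ⁅L, G₁⁆`. -/
def chiL1 (G : Type*) [Group G] : Subgroup (Chi G) := ⁅chiL G, chiG1 G⁆

/-- `L₂ = ⁅L, G₂⁆`. -/
def chiL2 (G : Type*) [Group G] : Subgroup (Chi G) := ⁅chiL G, chiG2 G⁆

/-- `R = ⁅⁅G₁, L⁆, G₂⁆`. -/
def chiR (G : Type*) [Group G] : Subgroup (Chi G) := ⁅⁅chiG1 G, chiL G⁆, chiG2 G⁆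

/-- `L₁₂ = ⁅L₁, L₂⁆`. -/
def chiL12 (G : Type*) [Group G] : Subgroup (Chi G) := ⁅chiL1 G, chiL2 G⁆

section Aux
variable (G : Type*) [Group G]

lemma key_abstract {H : Type*} [Group H] (a b c d e f : H)
    (h0 : (a * c) * (d * f) * (a * c)⁻¹ * (d * f)⁻¹ = 1)
    (h1 : (c⁻¹ * a⁻¹ * b) * (f⁻¹ * d⁻¹ * e) * (c⁻¹ * a⁻¹ * b)⁻¹ * (f⁻¹ * d⁻¹ * e)⁻¹ = 1)
    (h2 : c * f * c⁻¹ * f⁻¹ = 1)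
    (h3 : (c⁻¹ * b) * (f⁻¹ * e) * (c⁻¹ * b)⁻¹ * (f⁻¹ * e)⁻¹ = 1)
    (h4 : (b⁻¹ * a) * (e⁻¹ * d) * (b⁻¹ * a)⁻¹ * (e⁻¹ * d)⁻¹ = 1)
    (h5 : b * e * b⁻¹ * e⁻¹ = 1)
    (h6 : a * d * a⁻¹ * d⁻¹ = 1) :
    Commute (a⁻¹ * d) ⁅b, f⁆ := by
  have key : a⁻¹ * d * b * f * b⁻¹ * f⁻¹ * d⁻¹ * a * f * b * f⁻¹ * b⁻¹ = 1 :=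
    calc a⁻¹ * d * b * f * b⁻¹ * f⁻¹ * d⁻¹ * a * f * b * f⁻¹ * b⁻¹
        = a⁻¹ * d * b * f * b⁻¹ * f⁻¹ * d⁻¹ *
            ((a * c) * (d * f) * (a * c)⁻¹ * (d * f)⁻¹)⁻¹ *
            a * f * b * f⁻¹ * b⁻¹ := by rw [h0]; group
      _ = a⁻¹ * d * b * f * b⁻¹ * a * c * f⁻¹ * d⁻¹ * c⁻¹ * f * b * f⁻¹ * b⁻¹ := by group
      _ = a⁻¹ * d * b * f * b⁻¹ * a * c *
            ((c⁻¹ * a⁻¹ * b) * (f⁻¹ * d⁻¹ * e) * (c⁻¹ * a⁻¹ * b)⁻¹ * (f⁻¹ * d⁻¹ * e)⁻¹) *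
            f⁻¹ * d⁻¹ * c⁻¹ * f * b * f⁻¹ * b⁻¹ := by rw [h1]; group
      _ = a⁻¹ * d * b * d⁻¹ * e * b⁻¹ * a * c * e⁻¹ * c⁻¹ * f * b * f⁻¹ * b⁻¹ := by group
      _ = a⁻¹ * d * b * d⁻¹ * e * b⁻¹ * a * c * e⁻¹ * c⁻¹ *
            (c * f * c⁻¹ * f⁻¹) * f * b * f⁻¹ * b⁻¹ := by rw [h2]; group
      _ = a⁻¹ * d * b * d⁻¹ * e * b⁻¹ * a * c * e⁻¹ * f * c⁻¹ * b * f⁻¹ * b⁻¹ := by group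
      _ = a⁻¹ * d * b * d⁻¹ * e * b⁻¹ * a * c * e⁻¹ * f *
            ((c⁻¹ * b) * (f⁻¹ * e) * (c⁻¹ * b)⁻¹ * (f⁻¹ * e)⁻¹)⁻¹ *
            c⁻¹ * b * f⁻¹ * b⁻¹ := by rw [h3]; group
      _ = a⁻¹ * d * b * d⁻¹ * e * b⁻¹ * a * b * e⁻¹ * b⁻¹ := by group
      _ = a⁻¹ * d * b * d⁻¹ * e *
            ((b⁻¹ * a) * (e⁻¹ * d) * (b⁻¹ * a)⁻¹ * (e⁻¹ * d)⁻¹)⁻¹ *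
            b⁻¹ * a * b * e⁻¹ * b⁻¹ := by rw [h4]; group
      _ = a⁻¹ * d * a * d⁻¹ * e * b * e⁻¹ * b⁻¹ := by group
      _ = a⁻¹ * d * a * d⁻¹ * (b * e * b⁻¹ * e⁻¹) * e * b * e⁻¹ * b⁻¹ := by rw [h5]; group
      _ = a⁻¹ * d * a * d⁻¹ := by group
      _ = a⁻¹ * (a * d * a⁻¹ * d⁻¹) * d * a * d⁻¹ := by rw [h6]; group
      _ = 1 := by group
  have fin : (a⁻¹ * d) * ⁅b, f⁆ =
      (a⁻¹ * d * b * f * b⁻¹ * f⁻¹ * d⁻¹ * a * f * b * f⁻¹ * b⁻¹) * (⁅b, f⁆ * (a⁻¹ * d)) := by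
    rw [commutatorElement_def]; group
  rw [key, one_mul] at fin
  exact fin

lemma comm_rel {H : Type*} [Group H] {p q : H} (h : Commute p q) :
    p * q * p⁻¹ * q⁻¹ = 1 := by rw [h.eq]; group

lemma chi_comm (g : G) : Commute (chiIota1 G g) (chiIota2 G g) := by
  have hmem : Monoid.Coprod.inl g * Monoid.Coprod.inr g *
      (Monoid.Coprod.inl g)⁻¹ * (Monoid.Coprod.inr g)⁻¹ ∈ chiRel G :=
    Subgroup.subset_normalClosure ⟨g, rfl⟩
  have h0 : (QuotientGroup.mk' (chiRel G)) (Monoid.Coprod.inl g * Monoid.Coprod.inr g *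
      (Monoid.Coprod.inl g)⁻¹ * (Monoid.Coprod.inr g)⁻¹) = 1 :=
    (QuotientGroup.eq_one_iff _).mpr hmem
  have h1 : chiIota1 G g * chiIota2 G g * (chiIota1 G g)⁻¹ * (chiIota2 G g)⁻¹ = 1 := by
    simp only [map_mul, map_inv] at h0; exact h0
  have h2 : chiIota1 G g * chiIota2 G g =
      (chiIota1 G g * chiIota2 G g * (chiIota1 G g)⁻¹ * (chiIota2 G g)⁻¹) *
        (chiIota2 G g * chiIota1 G g) := by group
  rw [h1, one_mul] at h2
  exact h2


-- generic: conjugation stability of a closure from stability on generators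
lemma conj_mem_closure {H : Type*} [Group H] {T : Set H} (t : H)
    (h : ∀ s ∈ T, t * s * t⁻¹ ∈ Subgroup.closure T) :
    ∀ n ∈ Subgroup.closure T, t * n * t⁻¹ ∈ Subgroup.closure T := by
  intro n hn
  induction hn using Subgroup.closure_induction with
  | mem s hs => exact h s hs
  | one => simpa using Subgroup.one_mem _
  | mul p q hp hq ihp ihq =>
      have e : t * (p * q) * t⁻¹ = (t * p * t⁻¹) * (t * q * t⁻¹) := by group
      rw [e]; exact mul_mem ihp ihq
  | inv p hp ihp =>
      have e : t * p⁻¹ * t⁻¹ = (t * p * t⁻¹)⁻¹ := by group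
      rw [e]; exact inv_mem ihp

-- every element of Chi G lies in the closure of the two ranges
lemma chi_gen : ∀ z : Chi G,
    z ∈ Subgroup.closure (Set.range (chiIota1 G) ∪ Set.range (chiIota2 G)) := by
  intro z
  obtain ⟨w, rfl⟩ := QuotientGroup.mk'_surjective (chiRel G) z
  induction w using Monoid.Coprod.induction_on with
  | inl m => exact Subgroup.subset_closure (Or.inl ⟨m, rfl⟩)
  | inr n => exact Subgroup.subset_closure (Or.inr ⟨n, rfl⟩)
  | mul p q hp hq => rw [map_mul]; exact mul_mem hp hq

-- normality criterion
lemma normal_of_conj_gen (S : Subgroup (Chi G))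
    (h1 : ∀ (g : G), ∀ n ∈ S, chiIota1 G g * n * (chiIota1 G g)⁻¹ ∈ S)
    (h2 : ∀ (g : G), ∀ n ∈ S, chiIota2 G g * n * (chiIota2 G g)⁻¹ ∈ S) :
    S.Normal := by
  set K : Subgroup (Chi G) :=
    { carrier := {z | ∀ n ∈ S, z * n * z⁻¹ ∈ S ∧ z⁻¹ * n * z ∈ S}
      one_mem' := by
        intro n hn
        simp only [one_mul, inv_one, mul_one]
        exact ⟨hn, hn⟩
      mul_mem' := by
        intro z w hz hw n hn
        constructor
        · have e : z * w * n * (z * w)⁻¹ = z * (w * n * w⁻¹) * z⁻¹ := by group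
          rw [e]; exact (hz _ ((hw n hn).1)).1
        · have e : (z * w)⁻¹ * n * (z * w) = w⁻¹ * (z⁻¹ * n * z) * w := by group
          rw [e]; exact (hw _ ((hz n hn).2)).2
      inv_mem' := by
        intro z hz n hn
        refine ⟨?_, ?_⟩
        · have := (hz n hn).2; simpa using this
        · have := (hz n hn).1; simpa using this } with hK
  have hKtop : ∀ z : Chi G, z ∈ K := by
    intro z
    have := chi_gen G z
    have hle : Subgroup.closure (Set.range (chiIota1 G) ∪ Set.range (chiIota2 G)) ≤ K := by
      apply Subgroup.closure_le _ |>.mpr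
      rintro t (⟨g, rfl⟩ | ⟨g, rfl⟩)
      · intro n hn
        refine ⟨h1 g n hn, ?_⟩
        have e : (chiIota1 G g)⁻¹ * n * chiIota1 G g =
            chiIota1 G g⁻¹ * n * (chiIota1 G g⁻¹)⁻¹ := by
          simp only [map_inv]; group
        rw [e]; exact h1 g⁻¹ n hn
      · intro n hn
        refine ⟨h2 g n hn, ?_⟩
        have e : (chiIota2 G g)⁻¹ * n * chiIota2 G g =
            chiIota2 G g⁻¹ * n * (chiIota2 G g⁻¹)⁻¹ := by
          simp only [map_inv]; group
        rw [e]; exact h2 g⁻¹ n hn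
    exact hle this
  exact ⟨fun n hn g => by
    have e : g * n * g⁻¹ = g * n * g⁻¹ := rfl
    exact (hKtop g n hn).1⟩

lemma lam_mem (g : G) : (chiIota1 G g)⁻¹ * chiIota2 G g ∈ chiL G :=
  Subgroup.subset_closure ⟨g, rfl⟩

lemma L_normal : (chiL G).Normal := by
  apply normal_of_conj_gen
  · intro h
    apply conj_mem_closure
    rintro s ⟨g, rfl⟩
    have e : chiIota1 G h * ((chiIota1 G g)⁻¹ * chiIota2 G g) * (chiIota1 G h)⁻¹ =
        ((chiIota1 G (g * h⁻¹))⁻¹ * chiIota2 G (g * h⁻¹)) *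
          ((chiIota1 G h⁻¹)⁻¹ * chiIota2 G h⁻¹)⁻¹ := by
      simp only [map_mul, map_inv]; group
    rw [e]; exact mul_mem (lam_mem G _) (inv_mem (lam_mem G _))
  · intro h
    apply conj_mem_closure
    rintro s ⟨g, rfl⟩
    have e : chiIota2 G h * ((chiIota1 G g)⁻¹ * chiIota2 G g) * (chiIota2 G h)⁻¹ =
        ((chiIota1 G h⁻¹)⁻¹ * chiIota2 G h⁻¹)⁻¹ *
          ((chiIota1 G (g * h⁻¹))⁻¹ * chiIota2 G (g * h⁻¹)) := by
      simp only [map_mul, map_inv]; group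
    rw [e]; exact mul_mem (inv_mem (lam_mem G _)) (lam_mem G _)

lemma D_normal : (chiD G).Normal := by
  apply normal_of_conj_gen
  · intro h
    have : chiD G = Subgroup.closure {g | ∃ g₁ ∈ chiG1 G, ∃ g₂ ∈ chiG2 G, ⁅g₁, g₂⁆ = g} :=
      Subgroup.commutator_def _ _
    rw [this]
    apply conj_mem_closure
    rintro s ⟨p, ⟨x, rfl⟩, q, ⟨y, rfl⟩, rfl⟩
    rw [← this]
    have e : chiIota1 G h * ⁅chiIota1 G x, chiIota2 G y⁆ * (chiIota1 G h)⁻¹ =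
        ⁅chiIota1 G (h * x), chiIota2 G y⁆ * ⁅chiIota1 G h, chiIota2 G y⁆⁻¹ := by
      simp only [map_mul, commutatorElement_def]; group
    rw [e]
    exact mul_mem (Subgroup.commutator_mem_commutator ⟨h * x, rfl⟩ ⟨y, rfl⟩)
      (inv_mem (Subgroup.commutator_mem_commutator ⟨h, rfl⟩ ⟨y, rfl⟩))
  · intro h
    have : chiD G = Subgroup.closure {g | ∃ g₁ ∈ chiG1 G, ∃ g₂ ∈ chiG2 G, ⁅g₁, g₂⁆ = g} :=
      Subgroup.commutator_def _ _
    rw [this]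
    apply conj_mem_closure
    rintro s ⟨p, ⟨x, rfl⟩, q, ⟨y, rfl⟩, rfl⟩
    rw [← this]
    have e : chiIota2 G h * ⁅chiIota1 G x, chiIota2 G y⁆ * (chiIota2 G h)⁻¹ =
        ⁅chiIota1 G x, chiIota2 G h⁆⁻¹ * ⁅chiIota1 G x, chiIota2 G (h * y)⁆ := by
      simp only [map_mul, commutatorElement_def]; group
    rw [e]
    exact mul_mem (inv_mem (Subgroup.commutator_mem_commutator ⟨x, rfl⟩ ⟨h, rfl⟩))
      (Subgroup.commutator_mem_commutator ⟨x, rfl⟩ ⟨h * y, rfl⟩)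


section Rho
variable (G : Type*) [Group G]

def chiRho : Chi G →* G × G :=
  QuotientGroup.lift (chiRel G)
    (Monoid.Coprod.lift (MonoidHom.inl G G) (MonoidHom.inr G G))
    (by
      apply Subgroup.normalClosure_le_normal
      rintro w ⟨g, rfl⟩
      have : (Monoid.Coprod.lift (MonoidHom.inl G G) (MonoidHom.inr G G))
          (Monoid.Coprod.inl g * Monoid.Coprod.inr g *
            (Monoid.Coprod.inl g)⁻¹ * (Monoid.Coprod.inr g)⁻¹) = 1 := by
        simp only [map_mul, map_inv, Monoid.Coprod.lift_apply_inl, Monoid.Coprod.lift_apply_inr]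
        ext <;> simp
      simpa [MonoidHom.mem_ker] using this)

@[simp] lemma chiRho_iota1 (g : G) : chiRho G (chiIota1 G g) = (g, 1) := by
  rfl

@[simp] lemma chiRho_iota2 (g : G) : chiRho G (chiIota2 G g) = (1, g) := by
  rfl

lemma ker_rho_le_D : ∀ z : Chi G, chiRho G z = 1 → z ∈ chiD G := by
  have : (chiD G).Normal := D_normal G
  intro z hz
  -- section s : G × G →* Chi G ⧸ D
  let q : Chi G →* Chi G ⧸ chiD G := QuotientGroup.mk' (chiD G)
  have hcomm : ∀ g h : G, Commute (q (chiIota1 G g)) (q (chiIota2 G h)) := by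
    intro g h
    have hD : ⁅chiIota1 G g, chiIota2 G h⁆ ∈ chiD G :=
      Subgroup.commutator_mem_commutator ⟨g, rfl⟩ ⟨h, rfl⟩
    have h1 : q ⁅chiIota1 G g, chiIota2 G h⁆ = 1 := (QuotientGroup.eq_one_iff _).mpr hD
    have h2 : q (chiIota1 G g) * q (chiIota2 G h) =
        q ⁅chiIota1 G g, chiIota2 G h⁆ * (q (chiIota2 G h) * q (chiIota1 G g)) := by
      simp only [commutatorElement_def, map_mul, map_inv]; group
    rw [h1, one_mul] at h2
    exact h2
  let s : G × G →* Chi G ⧸ chiD G :=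
    MonoidHom.noncommCoprod (q.comp (chiIota1 G)) (q.comp (chiIota2 G)) (fun m n => hcomm m n)
  have hsec : s.comp (chiRho G) = q := by
    apply QuotientGroup.monoidHom_ext
    apply Monoid.Coprod.hom_ext
    · ext g
      show s (chiRho G (chiIota1 G g)) = q (chiIota1 G g)
      rw [chiRho_iota1, MonoidHom.noncommCoprod_apply]
      simp
    · ext g
      show s (chiRho G (chiIota2 G g)) = q (chiIota2 G g)
      rw [chiRho_iota2, MonoidHom.noncommCoprod_apply]
      simp
  have : q z = 1 := by
    have h1 : s (chiRho G z) = q z := by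
      have := congrArg (fun (f : Chi G →* Chi G ⧸ chiD G) => f z) hsec
      simpa using this
    rw [hz] at h1
    simpa using h1.symm
  exact (QuotientGroup.eq_one_iff _).mp this

end Rho
end Aux
section Main
variable (G : Type*) [Group G]

lemma conj_eq_of_commute {H : Type*} [Group H] {t w : H} (h : Commute t w) :
    t * w * t⁻¹ = w := by
  calc t * w * t⁻¹ = (t * w) * t⁻¹ := by group
    _ = (w * t) * t⁻¹ := by rw [h.eq]
    _ = w := by group

lemma conj_eq_of_commute' {H : Type*} [Group H] {t w : H} (h : Commute t w) :
    t⁻¹ * w * t = w := by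
  calc t⁻¹ * w * t = t⁻¹ * (w * t) := by group
    _ = t⁻¹ * (t * w) := by rw [← h.eq]
    _ = w := by group

lemma comm_conj_commutator {H : Type*} [Group H] {u t : H} (l : H) (h : Commute u t) :
    ⁅u, t * l⁆ = t * ⁅u, l⁆ * t⁻¹ := by
  calc ⁅u, t * l⁆ = (u * t) * l * u⁻¹ * l⁻¹ * t⁻¹ := by
        rw [commutatorElement_def]; group
    _ = (t * u) * l * u⁻¹ * l⁻¹ * t⁻¹ := by rw [h.eq]
    _ = t * ⁅u, l⁆ * t⁻¹ := by rw [commutatorElement_def]; group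

lemma commutator_mul_right_free {H : Type*} [Group H] (a b w : H) :
    ⁅a, b * w⁆ = ⁅a, b⁆ * (b * ⁅a, w⁆ * b⁻¹) := by
  simp only [commutatorElement_def]; group

lemma commutator_inv_right_free {H : Type*} [Group H] (a b : H) :
    ⁅a, b⁻¹⁆ = b⁻¹ * ⁅a, b⁆⁻¹ * b := by
  simp only [commutatorElement_def]; group

lemma chi_key (u x y : G) :
    Commute ((chiIota1 G u)⁻¹ * chiIota2 G u) ⁅chiIota1 G x, chiIota2 G y⁆ := by
  have c0 := chi_comm G (u * y)
  have c1 := chi_comm G (y⁻¹ * u⁻¹ * x)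
  have c2 := chi_comm G y
  have c3 := chi_comm G (y⁻¹ * x)
  have c4 := chi_comm G (x⁻¹ * u)
  have c5 := chi_comm G x
  have c6 := chi_comm G u
  simp only [map_mul, map_inv] at c0 c1 c3 c4
  exact key_abstract (chiIota1 G u) (chiIota1 G x) (chiIota1 G y)
    (chiIota2 G u) (chiIota2 G x) (chiIota2 G y)
    (comm_rel c0) (comm_rel c1) (comm_rel c2) (comm_rel c3) (comm_rel c4)
    (comm_rel c5) (comm_rel c6)

lemma L_comm_Dgen : ∀ l ∈ chiL G, ∀ x y : G, Commute l ⁅chiIota1 G x, chiIota2 G y⁆ := by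
  intro l hl
  induction hl using Subgroup.closure_induction with
  | mem s hs =>
      obtain ⟨g, rfl⟩ := hs
      exact fun x y => chi_key G g x y
  | one => exact fun x y => Commute.one_left _
  | mul p q hp hq ihp ihq => exact fun x y => (ihp x y).mul_left (ihq x y)
  | inv p hp ihp => exact fun x y => (ihp x y).inv_left

lemma LD : ∀ l ∈ chiL G, ∀ d ∈ chiD G, Commute l d := by
  intro l hl d hd
  rw [chiD, Subgroup.commutator_def] at hd
  induction hd using Subgroup.closure_induction with
  | mem s hs =>
      obtain ⟨p, ⟨x, rfl⟩, q, ⟨y, rfl⟩, rfl⟩ := hs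
      exact L_comm_Dgen G l hl x y
  | one => exact Commute.one_right _
  | mul p q hp hq ihp ihq => exact ihp.mul_right ihq
  | inv p hp ihp => exact ihp.inv_right

lemma L1_le_L : chiL1 G ≤ chiL G := by
  rw [chiL1]
  apply (Subgroup.commutator_le).mpr
  intro l hl p _
  have e : ⁅l, p⁆ = l * (p * l⁻¹ * p⁻¹) := by rw [commutatorElement_def]; group
  rw [e]
  exact mul_mem hl ((L_normal G).conj_mem _ (inv_mem hl) p)

lemma L2_le_L : chiL2 G ≤ chiL G := by
  rw [chiL2]
  apply (Subgroup.commutator_le).mpr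
  intro l hl p _
  have e : ⁅l, p⁆ = l * (p * l⁻¹ * p⁻¹) := by rw [commutatorElement_def]; group
  rw [e]
  exact mul_mem hl ((L_normal G).conj_mem _ (inv_mem hl) p)

lemma rho2_L1 : ∀ u ∈ chiL1 G, (chiRho G u).2 = 1 := by
  intro u hu
  rw [chiL1, Subgroup.commutator_def] at hu
  induction hu using Subgroup.closure_induction with
  | mem s hs =>
      obtain ⟨g₁, _, g₂, ⟨x, rfl⟩, rfl⟩ := hs
      rw [map_commutatorElement, chiRho_iota1]
      simp [commutatorElement_def]
  | one => simp
  | mul p q hp hq ihp ihq => simp [map_mul, ihp, ihq]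
  | inv p hp ihp => simp [map_inv, ihp]

lemma rho1_L2 : ∀ v ∈ chiL2 G, (chiRho G v).1 = 1 := by
  intro v hv
  rw [chiL2, Subgroup.commutator_def] at hv
  induction hv using Subgroup.closure_induction with
  | mem s hs =>
      obtain ⟨g₁, _, g₂, ⟨y, rfl⟩, rfl⟩ := hs
      rw [map_commutatorElement, chiRho_iota2]
      simp [commutatorElement_def]
  | one => simp
  | mul p q hp hq ihp ihq => simp [map_mul, ihp, ihq]
  | inv p hp ihp => simp [map_inv, ihp]

lemma rho2_L2_comm : ∀ v ∈ chiL2 G, (chiRho G v).2 ∈ commutator G := by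
  intro v hv
  rw [chiL2, Subgroup.commutator_def] at hv
  induction hv using Subgroup.closure_induction with
  | mem s hs =>
      obtain ⟨g₁, _, g₂, ⟨y, rfl⟩, rfl⟩ := hs
      rw [map_commutatorElement, chiRho_iota2]
      have : (⁅chiRho G g₁, ((1 : G), y)⁆).2 = ⁅(chiRho G g₁).2, y⁆ := by
        simp [commutatorElement_def]
      rw [this, commutator_def]
      exact Subgroup.commutator_mem_commutator (Subgroup.mem_top _) (Subgroup.mem_top _)
  | one => simp only [map_one, Prod.snd_one]; exact one_mem _
  | mul p q hp hq ihp ihq =>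
      simp only [map_mul, Prod.snd_mul]; exact mul_mem ihp ihq
  | inv p hp ihp =>
      simp only [map_inv, Prod.snd_inv]; exact inv_mem ihp

lemma DEC : ∀ c ∈ commutator G, ∃ l ∈ chiL G, chiIota2 G c * l⁻¹ ∈ chiD G := by
  intro c hc
  rw [commutator_eq_closure] at hc
  induction hc using Subgroup.closure_induction with
  | mem s hs =>
      obtain ⟨a, b, rfl⟩ := hs
      refine ⟨((chiIota1 G a)⁻¹ * chiIota2 G a) * ((chiIota1 G b)⁻¹ * chiIota2 G b) *
        ((chiIota1 G (b * a))⁻¹ * chiIota2 G (b * a))⁻¹, ?_, ?_⟩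
      · exact mul_mem (mul_mem (lam_mem G a) (lam_mem G b)) (inv_mem (lam_mem G (b * a)))
      · apply ker_rho_le_D
        simp only [map_mul, map_inv, map_commutatorElement, chiRho_iota1, chiRho_iota2]
        rw [Prod.ext_iff]
        constructor
        · simp only [commutatorElement_def, Prod.mk_mul_mk, Prod.inv_mk, Prod.fst_mul,
            Prod.fst_one, Prod.fst_inv]
          group
        · simp only [commutatorElement_def, Prod.mk_mul_mk, Prod.inv_mk, Prod.snd_mul,
            Prod.snd_one, Prod.snd_inv]
          group
  | one => exact ⟨1, one_mem _, by simpa using one_mem (chiD G)⟩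
  | mul c₁ c₂ hc₁ hc₂ ih₁ ih₂ =>
      obtain ⟨l₁, hl₁, ht₁⟩ := ih₁
      obtain ⟨l₂, hl₂, ht₂⟩ := ih₂
      refine ⟨l₁ * l₂, mul_mem hl₁ hl₂, ?_⟩
      have e : chiIota2 G (c₁ * c₂) * (l₁ * l₂)⁻¹ =
          (chiIota2 G c₁ * l₁⁻¹) * (l₁ * (chiIota2 G c₂ * l₂⁻¹) * l₁⁻¹) := by
        simp only [map_mul]; group
      rw [e]
      exact mul_mem ht₁ ((D_normal G).conj_mem _ ht₂ l₁)
  | inv c hc ih =>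
      obtain ⟨l, hl, ht⟩ := ih
      refine ⟨l⁻¹, inv_mem hl, ?_⟩
      have e : chiIota2 G c⁻¹ * (l⁻¹)⁻¹ =
          (l⁻¹ * (chiIota2 G c * l⁻¹) * (l⁻¹)⁻¹)⁻¹ := by
        simp only [map_inv]; group
      rw [e]
      exact inv_mem ((D_normal G).conj_mem _ ht l⁻¹)

end Main

section Theorem
variable (G : Type*) [Group G]

theorem chiL12_exponent_of_commutators' (m : ℕ)
    (hG : ∀ x y : G, ⁅x, y⁆ ^ m = 1) :
    ∀ z ∈ chiL12 G, z ^ m = 1 := by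
  have hLD := LD G
  have hDL_comm_iota2 : ∀ r, r ∈ chiD G → r ∈ chiL G →
      ∀ c ∈ commutator G, Commute r (chiIota2 G c) := by
    intro r hrD hrL c hc
    obtain ⟨l, hl, ht⟩ := DEC G c hc
    have e : chiIota2 G c = (chiIota2 G c * l⁻¹) * l := by group
    rw [e]
    exact (hLD r hrL _ ht).mul_right (hLD l hl r hrD).symm
  -- r ∈ D for any c, provided (ρ u).2 = 1
  have hrD : ∀ u, (chiRho G u).2 = 1 → ∀ c' : G, ⁅u, chiIota2 G c'⁆ ∈ chiD G := by
    intro u hu2 c'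
    apply ker_rho_le_D
    rw [map_commutatorElement, chiRho_iota2]
    have hsplit : chiRho G u = ((chiRho G u).1, 1) := by
      rw [← hu2]
    rw [hsplit]
    rw [Prod.ext_iff]
    constructor
    · simp only [commutatorElement_def, Prod.mk_mul_mk, Prod.inv_mk, Prod.fst_mul,
        Prod.fst_one, Prod.fst_inv]
      group
    · simp only [commutatorElement_def, Prod.mk_mul_mk, Prod.inv_mk, Prod.snd_mul,
        Prod.snd_one, Prod.snd_inv]
      group
  -- the main Q lemma
  have hQ : ∀ u, u ∈ chiL G → (chiRho G u).2 = 1 →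
      ∀ c ∈ commutator G,
        (⁅u, chiIota2 G c⁆ ∈ chiD G ∧ ⁅u, chiIota2 G c⁆ ∈ chiL G) ∧
          ⁅u, chiIota2 G c⁆ ^ m = 1 := by
    intro u huL hu2 c hc
    have hcc := hc
    rw [commutator_eq_closure] at hc
    induction hc using Subgroup.closure_induction with
    | mem s hs =>
        have hs_comm : s ∈ commutator G := by
          rw [commutator_eq_closure]; exact Subgroup.subset_closure hs
        obtain ⟨a, b, rfl⟩ := hs
        -- membership in L
        obtain ⟨l, hl, ht⟩ := DEC G _ hs_comm
        set t := chiIota2 G ⁅a, b⁆ * l⁻¹ with htdef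
        have hsplit : chiIota2 G ⁅a, b⁆ = t * l := by rw [htdef]; group
        have hrL : ⁅u, chiIota2 G ⁅a, b⁆⁆ ∈ chiL G := by
          rw [hsplit, comm_conj_commutator l (hLD u huL t ht)]
          have hul : ⁅u, l⁆ ∈ chiL G := by
            rw [commutatorElement_def]
            exact mul_mem (mul_mem (mul_mem huL hl) (inv_mem huL)) (inv_mem hl)
          exact (L_normal G).conj_mem _ hul t
        refine ⟨⟨hrD u hu2 _, hrL⟩, ?_⟩
        -- torsion
        have hpow : ∀ k : ℕ, ⁅u, chiIota2 G (⁅a, b⁆ ^ k)⁆ = ⁅u, chiIota2 G ⁅a, b⁆⁆ ^ k := by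
          intro k
          induction k with
          | zero => simp
          | succ k ih =>
              have e1 : (⁅a, b⁆ : G) ^ (k + 1) = ⁅a, b⁆ * ⁅a, b⁆ ^ k := by
                rw [pow_succ']
              rw [e1, map_mul, commutator_mul_right_free, ih]
              have hcp : ⁅u, chiIota2 G ⁅a, b⁆⁆ ^ k ∈ chiD G :=
                pow_mem (hrD u hu2 _) k
              have hcpl : ⁅u, chiIota2 G ⁅a, b⁆⁆ ^ k ∈ chiL G := pow_mem hrL k
              have hcomm : Commute (chiIota2 G ⁅a, b⁆) (⁅u, chiIota2 G ⁅a, b⁆⁆ ^ k) :=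
                (hDL_comm_iota2 _ hcp hcpl _ hs_comm).symm
              rw [conj_eq_of_commute hcomm, pow_succ']
        have := hpow m
        rw [hG a b] at this
        simpa using this.symm
    | one =>
        refine ⟨⟨?_, ?_⟩, ?_⟩ <;> simp [one_mem]
    | mul c₁ c₂ hc₁ hc₂ ih₁ ih₂ =>
        have hc₁' : c₁ ∈ commutator G := by rw [commutator_eq_closure]; exact hc₁
        have hc₂' : c₂ ∈ commutator G := by rw [commutator_eq_closure]; exact hc₂
        obtain ⟨⟨h₁D, h₁L⟩, h₁m⟩ := ih₁ hc₁'
        obtain ⟨⟨h₂D, h₂L⟩, h₂m⟩ := ih₂ hc₂'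
        have e : ⁅u, chiIota2 G (c₁ * c₂)⁆ =
            ⁅u, chiIota2 G c₁⁆ * (chiIota2 G c₁ * ⁅u, chiIota2 G c₂⁆ * (chiIota2 G c₁)⁻¹) := by
          rw [map_mul, commutator_mul_right_free]
        have hcm : Commute (chiIota2 G c₁) ⁅u, chiIota2 G c₂⁆ :=
          (hDL_comm_iota2 _ h₂D h₂L _ hc₁').symm
        rw [e, conj_eq_of_commute hcm]
        have hc12 : Commute ⁅u, chiIota2 G c₁⁆ ⁅u, chiIota2 G c₂⁆ :=
          hLD _ h₁L _ h₂D |>.symm.symm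
        refine ⟨⟨mul_mem h₁D h₂D, mul_mem h₁L h₂L⟩, ?_⟩
        rw [hc12.mul_pow, h₁m, h₂m, one_mul]
    | inv c hc ih =>
        have hc' : c ∈ commutator G := by rw [commutator_eq_closure]; exact hc
        obtain ⟨⟨hD, hL⟩, hm⟩ := ih hc'
        have e : ⁅u, chiIota2 G c⁻¹⁆ =
            (chiIota2 G c)⁻¹ * ⁅u, chiIota2 G c⁆⁻¹ * chiIota2 G c := by
          rw [map_inv, commutator_inv_right_free]
        have hcm : Commute (chiIota2 G c) ⁅u, chiIota2 G c⁆⁻¹ :=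
          ((hDL_comm_iota2 _ hD hL _ hc').symm).inv_right
        rw [e, conj_eq_of_commute' hcm]
        refine ⟨⟨inv_mem hD, inv_mem hL⟩, ?_⟩
        rw [inv_pow, hm, inv_one]
  -- generators of L12
  have hgen : ∀ s ∈ {g | ∃ g₁ ∈ chiL1 G, ∃ g₂ ∈ chiL2 G, ⁅g₁, g₂⁆ = g},
      (s ∈ chiD G ∧ s ∈ chiL G) ∧ s ^ m = 1 := by
    rintro s ⟨u, hu, v, hv, rfl⟩
    have huL : u ∈ chiL G := L1_le_L G hu
    have hvL : v ∈ chiL G := L2_le_L G hv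
    have hu2 : (chiRho G u).2 = 1 := rho2_L1 G u hu
    have hv1 : (chiRho G v).1 = 1 := rho1_L2 G v hv
    have hcv : (chiRho G v).2 ∈ commutator G := rho2_L2_comm G v hv
    set c := (chiRho G v).2 with hcdef
    have hdD : v * (chiIota2 G c)⁻¹ ∈ chiD G := by
      apply ker_rho_le_D
      rw [map_mul, map_inv, chiRho_iota2]
      rw [Prod.ext_iff]
      constructor
      · simp only [Prod.fst_mul, Prod.fst_inv, Prod.fst_one, hv1]
        simp
      · simp only [Prod.snd_mul, Prod.snd_inv, Prod.snd_one, ← hcdef]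
        simp
    have hsplit : v = (v * (chiIota2 G c)⁻¹) * chiIota2 G c := by group
    have e : ⁅u, v⁆ = (v * (chiIota2 G c)⁻¹) * ⁅u, chiIota2 G c⁆ * (v * (chiIota2 G c)⁻¹)⁻¹ := by
      nth_rewrite 1 [hsplit]
      exact comm_conj_commutator _ (hLD u huL _ hdD)
    obtain ⟨⟨hD, hL⟩, hm⟩ := hQ u huL hu2 c hcv
    have hcomm : Commute (v * (chiIota2 G c)⁻¹) ⁅u, chiIota2 G c⁆ :=
      (hLD _ hL _ hdD).symm
    rw [e, conj_eq_of_commute hcomm]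
    exact ⟨⟨hD, hL⟩, hm⟩
  -- final closure induction
  intro z hz
  rw [chiL12, Subgroup.commutator_def] at hz
  have main : (z ∈ chiD G ∧ z ∈ chiL G) ∧ z ^ m = 1 := by
    induction hz using Subgroup.closure_induction with
    | mem s hs => exact hgen s hs
    | one => exact ⟨⟨one_mem _, one_mem _⟩, one_pow m⟩
    | mul p q hp hq ihp ihq =>
        obtain ⟨⟨hpD, hpL⟩, hpm⟩ := ihp
        obtain ⟨⟨hqD, hqL⟩, hqm⟩ := ihq
        have hcom : Commute p q := hLD p hpL q hqD
        refine ⟨⟨mul_mem hpD hqD, mul_mem hpL hqL⟩, ?_⟩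
        rw [hcom.mul_pow, hpm, hqm, one_mul]
    | inv p hp ihp =>
        obtain ⟨⟨hpD, hpL⟩, hpm⟩ := ihp
        exact ⟨⟨inv_mem hpD, inv_mem hpL⟩, by rw [inv_pow, hpm, inv_one]⟩
  exact main.2

end Theorem

theorem chiL12_exponent_of_commutators (G : Type*) [Group G] (m : ℕ) (hm : 0 < m)
    (hG : ∀ x y : G, ⁅x, y⁆ ^ m = 1) :
    ∀ z ∈ chiL12 G, z ^ m = 1 := by
  intro z hz
  exact chiL12_exponent_of_commutators' G m hG z hz
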